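/- Let X be a topological space, let {B_i : i < k} be a finite family of regular open subsets of X, and let T be a regular open subset of X with T ⊆ ⋃_{i<k} B_i. For each i < k put C_i = T ∩ (B_i ∖ ⋃_{j<i} cl B_j). Then for every x ∈ cl T, the set {i < k : x ∈ cl C_i} has cardinality at most one more than the cardinality of {i < k : x ∈ Fr B_i}. -/

import Mathlib

/-- If the regular open set `T` is covered by the regular open sets `B i`, `i < k`, and
`C i = T ∩ (B i \ ⋃_{j < i} cl (B j))`, then for `x ∈ cl T` the set of indices `i` with
`x ∈ cl (C i)` has at most one element more than the set of indices with `x ∈ Fr (B i)`. -/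
theorem statement3 {X : Type*} [TopologicalSpace X] (k : ℕ)
    (B : Fin k → Set X) (hB : ∀ i, B i = interior (closure (B i)))
    (T : Set X) (hT : T = interior (closure T)) (hTcov : T ⊆ ⋃ i, B i)
    (C : Fin k → Set X)
    (hC : ∀ i, C i = T ∩ (B i \ ⋃ j < i, closure (B j)))
    (x : X) (hx : x ∈ closure T) :
    {i : Fin k | x ∈ closure (C i)}.ncard ≤ {i : Fin k | x ∈ frontier (B i)}.ncard + 1 := by
  set S : Set (Fin k) := {i : Fin k | x ∈ closure (C i)} with hS
  set F : Set (Fin k) := {i : Fin k | x ∈ frontier (B i)} with hF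
  have hBopen : ∀ i, IsOpen (B i) := fun i => (hB i) ▸ isOpen_interior
  -- if i ∈ S \ F then x ∈ B i
  have hmem : ∀ i, i ∈ S \ F → x ∈ B i := by
    rintro i ⟨hiS, hiF⟩
    have hCB : C i ⊆ B i := by rw [hC i]; intro y hy; exact hy.2.1
    have hxc : x ∈ closure (B i) := closure_mono hCB hiS
    by_contra hxB
    exact hiF ⟨hxc, by rwa [(hBopen i).interior_eq]⟩
  -- S \ F is a subsingleton
  have hsub : (S \ F).Subsingleton := by
    intro i hi j hj
    by_contra hne
    -- wlog i < j
    rcases lt_or_gt_of_ne hne with h | h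
    · have hxB := hmem i hi
      have hdisj : C j ∩ B i = ∅ := by
        rw [hC j]
        ext y
        simp only [Set.mem_inter_iff, Set.mem_diff, Set.mem_iUnion, Set.mem_empty_iff_false,
          iff_false, not_and]
        rintro ⟨_, _, hy2⟩ hyB
        exact hy2 ⟨i, h, subset_closure hyB⟩
      have := hj.1
      rw [hS, Set.mem_setOf_eq, mem_closure_iff] at this
      obtain ⟨y, hy1, hy2⟩ := this (B i) (hBopen i) hxB
      exact absurd (Set.mem_inter hy2 hy1) (by rw [hdisj]; exact Set.notMem_empty y)
    · have hxB := hmem j hj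
      have hdisj : C i ∩ B j = ∅ := by
        rw [hC i]
        ext y
        simp only [Set.mem_inter_iff, Set.mem_diff, Set.mem_iUnion, Set.mem_empty_iff_false,
          iff_false, not_and]
        rintro ⟨_, _, hy2⟩ hyB
        exact hy2 ⟨j, h, subset_closure hyB⟩
      have := hi.1
      rw [hS, Set.mem_setOf_eq, mem_closure_iff] at this
      obtain ⟨y, hy1, hy2⟩ := this (B j) (hBopen j) hxB
      exact absurd (Set.mem_inter hy2 hy1) (by rw [hdisj]; exact Set.notMem_empty y)
  have hfin : S.Finite := Set.toFinite S
  have hFfin : F.Finite := Set.toFinite F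
  calc S.ncard = ((S ∩ F) ∪ (S \ F)).ncard := by rw [Set.inter_union_diff]
    _ ≤ (S ∩ F).ncard + (S \ F).ncard := Set.ncard_union_le _ _
    _ ≤ F.ncard + 1 :=
        add_le_add (Set.ncard_le_ncard Set.inter_subset_right hFfin)
          ((Set.ncard_le_one_iff (hfin.diff : (S \ F).Finite)).mpr fun ha hb => hsub ha hb)
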